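/- arXiv:2601.01583 — 3 statements merged into one kernel-verified Lean document; each statement's English description precedes it below -/
import Mathlib

section
/- Let λ > 0, p₁, p₂ ∈ [0,1] with p₁ + p₂ ≤ 1. The function f(x) = λ e^{-λx} [p₁ - p₂ ln(1 - e^{-λx}) + ((1-p₁-p₂)/2)(ln(1 - e^{-λx}))²] is nonnegative on (0,∞) and ∫₀^∞ f(x) dx = 1. -/
open MeasureTheory Real Filter

lemma aux_mul_log2 : Filter.Tendsto (fun u : ℝ => u * (Real.log u) ^ 2)
    (nhdsWithin 0 (Set.Ici 0)) (nhds 0) := by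
  have hI : Set.Ici (0:ℝ) = insert 0 (Set.Ioi 0) := (by rw [Set.Ioi_insert] : insert (0:ℝ) (Set.Ioi 0) = Set.Ici 0).symm
  rw [hI, nhdsWithin_insert, Filter.tendsto_sup]
  constructor
  · have h0 := tendsto_pure_nhds (fun u : ℝ => u * (Real.log u) ^ 2) 0
    simpa using h0
  · have h := tendsto_log_mul_rpow_nhdsGT_zero (r := 1/2) (by norm_num)
    have h2 : Filter.Tendsto (fun x : ℝ => (Real.log x * x ^ (1/2:ℝ)) *
        (Real.log x * x ^ (1/2:ℝ))) (nhdsWithin 0 (Set.Ioi 0)) (nhds 0) := by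
      simpa using h.mul h
    refine h2.congr' ?_
    filter_upwards [self_mem_nhdsWithin] with x hx
    have hx0 : (0:ℝ) < x := hx
    have hxx : x ^ (1/2:ℝ) * x ^ (1/2:ℝ) = x := by
      rw [← Real.rpow_add hx0]; norm_num
    rw [mul_mul_mul_comm, hxx]
    ring

lemma aux_mul_log2' : Filter.Tendsto (fun u : ℝ => u * (Real.log u) ^ 2)
    (nhdsWithin 0 (Set.Ici 0)) (nhds 0) := aux_mul_log2

theorem stmt_10 (lam p₁ p₂ : ℝ) (hlam : 0 < lam)
    (hp₁ : p₁ ∈ Set.Icc (0:ℝ) 1) (hp₂ : p₂ ∈ Set.Icc (0:ℝ) 1) (hsum : p₁ + p₂ ≤ 1) :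
    (∀ x ∈ Set.Ioi (0:ℝ),
      0 ≤ lam * Real.exp (-lam * x) *
        (p₁ - p₂ * Real.log (1 - Real.exp (-lam * x)) +
          ((1 - p₁ - p₂) / 2) * (Real.log (1 - Real.exp (-lam * x))) ^ 2)) ∧
    ∫ x in Set.Ioi (0:ℝ),
        lam * Real.exp (-lam * x) *
          (p₁ - p₂ * Real.log (1 - Real.exp (-lam * x)) +
            ((1 - p₁ - p₂) / 2) * (Real.log (1 - Real.exp (-lam * x))) ^ 2) = 1 := by
  obtain ⟨hp₁0, hp₁1⟩ := hp₁
  obtain ⟨hp₂0, hp₂1⟩ := hp₂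
  -- abbreviations
  set A : ℝ := p₁ + p₂ + (1 - p₁ - p₂) with hA
  set B : ℝ := p₂ + (1 - p₁ - p₂) with hB
  set C : ℝ := (1 - p₁ - p₂) / 2 with hC
  -- the antiderivative, as composition G ∘ u
  set G : ℝ → ℝ := fun u => A * u - B * (u * Real.log u) + C * (u * (Real.log u) ^ 2) with hG
  set F : ℝ → ℝ := fun x => G (1 - Real.exp (-lam * x)) with hF
  have hexp_lt : ∀ x : ℝ, 0 < x → Real.exp (-lam * x) < 1 := by
    intro x hx
    have : -lam * x < 0 := by nlinarith
    calc Real.exp (-lam * x) < Real.exp 0 := Real.exp_lt_exp.2 this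
    _ = 1 := Real.exp_zero
  -- nonnegativity
  have hnonneg : ∀ x ∈ Set.Ioi (0:ℝ),
      0 ≤ lam * Real.exp (-lam * x) *
        (p₁ - p₂ * Real.log (1 - Real.exp (-lam * x)) +
          ((1 - p₁ - p₂) / 2) * (Real.log (1 - Real.exp (-lam * x))) ^ 2) := by
    intro x hx
    have hu0 : 0 < 1 - Real.exp (-lam * x) := by linarith [hexp_lt x hx]
    have hu1 : 1 - Real.exp (-lam * x) ≤ 1 := by linarith [Real.exp_pos (-lam * x)]
    have hlog : Real.log (1 - Real.exp (-lam * x)) ≤ 0 := Real.log_nonpos hu0.le hu1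
    apply mul_nonneg (mul_nonneg hlam.le (Real.exp_pos _).le)
    nlinarith [mul_nonneg hp₂0 (neg_nonneg.2 hlog), sq_nonneg (Real.log (1 - Real.exp (-lam * x))),
      mul_nonneg (by linarith : (0:ℝ) ≤ (1 - p₁ - p₂) / 2)
        (sq_nonneg (Real.log (1 - Real.exp (-lam * x))))]
  refine ⟨hnonneg, ?_⟩
  -- derivative
  have hderiv : ∀ x ∈ Set.Ioi (0:ℝ), HasDerivAt F
      (lam * Real.exp (-lam * x) *
        (p₁ - p₂ * Real.log (1 - Real.exp (-lam * x)) +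
          ((1 - p₁ - p₂) / 2) * (Real.log (1 - Real.exp (-lam * x))) ^ 2)) x := by
    intro x hx
    have hu0 : 0 < 1 - Real.exp (-lam * x) := by linarith [hexp_lt x hx]
    have h1 : HasDerivAt (fun y : ℝ => 1 - Real.exp (-lam * y)) (lam * Real.exp (-lam * x)) x := by
      have h0 : HasDerivAt (fun y : ℝ => -lam * y) (-lam) x := by
        simpa using (hasDerivAt_id x).const_mul (-lam)
      have h2 := (h0.exp).const_sub 1
      refine h2.congr_deriv ?_
      ring
    have hlog : HasDerivAt (fun y : ℝ => Real.log (1 - Real.exp (-lam * y)))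
        (lam * Real.exp (-lam * x) / (1 - Real.exp (-lam * x))) x := h1.log hu0.ne'
    have hFd := ((h1.const_mul A).sub ((h1.mul hlog).const_mul B)).add
      ((h1.mul (hlog.pow 2)).const_mul C)
    refine HasDerivAt.congr_deriv (f := F) hFd ?_
    have hne := hu0.ne'
    have hne' : (1:ℝ) - Real.exp (-(lam * x)) ≠ 0 := by rw [← neg_mul]; exact hu0.ne'
    field_simp [hne, hne']
    simp only [hA, hB, hC, Pi.pow_apply]
    ring
  -- continuity at 0 within Ici 0
  have hGt : Filter.Tendsto G (nhdsWithin 0 (Set.Ici 0)) (nhds 0) := by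
    have h1 : Filter.Tendsto (fun u : ℝ => u * Real.log u)
        (nhdsWithin 0 (Set.Ici 0)) (nhds 0) := by
      have := Real.continuous_mul_log.tendsto 0
      simpa using this.mono_left nhdsWithin_le_nhds
    have h2 := aux_mul_log2
    have h0 : Filter.Tendsto (fun u : ℝ => u) (nhdsWithin 0 (Set.Ici 0)) (nhds 0) :=
      (continuous_id.tendsto 0).mono_left nhdsWithin_le_nhds
    have hcomb := ((h0.const_mul A).sub (h1.const_mul B)).add (h2.const_mul C)
    simpa using hcomb
  have hu_cont : Filter.Tendsto (fun x : ℝ => 1 - Real.exp (-lam * x))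
      (nhdsWithin 0 (Set.Ici 0)) (nhdsWithin 0 (Set.Ici 0)) := by
    apply tendsto_nhdsWithin_of_tendsto_nhds_of_eventually_within
    · have hc : Continuous fun x : ℝ => 1 - Real.exp (-lam * x) := by continuity
      have := (hc.tendsto 0).mono_left (nhdsWithin_le_nhds (s := Set.Ici 0))
      simpa using this
    · filter_upwards [self_mem_nhdsWithin] with x hx
      have hx0 : (0:ℝ) ≤ x := hx
      have hle : Real.exp (-lam * x) ≤ Real.exp 0 := Real.exp_le_exp.2 (by nlinarith)
      rw [Real.exp_zero] at hle
      exact Set.mem_Ici.2 (by linarith)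
  have hF0 : F 0 = 0 := by simp [hF, hG]
  have hcont : ContinuousWithinAt F (Set.Ici 0) 0 := by
    show Filter.Tendsto F (nhdsWithin 0 (Set.Ici 0)) (nhds (F 0))
    rw [hF0]
    exact hGt.comp hu_cont
  -- limit at infinity
  have htop : Filter.Tendsto F Filter.atTop (nhds 1) := by
    have hl : Filter.Tendsto (fun x : ℝ => lam * x) Filter.atTop Filter.atTop :=
      Filter.Tendsto.const_mul_atTop hlam Filter.tendsto_id
    have he : Filter.Tendsto (fun x : ℝ => Real.exp (-lam * x)) Filter.atTop (nhds 0) := by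
      have h := Real.tendsto_exp_neg_atTop_nhds_zero.comp hl
      refine h.congr fun x => ?_
      simp [Function.comp, neg_mul]
    have hu1 : Filter.Tendsto (fun x : ℝ => 1 - Real.exp (-lam * x)) Filter.atTop (nhds 1) := by
      simpa using (tendsto_const_nhds (x := (1:ℝ))).sub he
    have hlog1 : Filter.Tendsto (fun x : ℝ => Real.log (1 - Real.exp (-lam * x)))
        Filter.atTop (nhds 0) := by
      have := (Real.continuousAt_log one_ne_zero).tendsto.comp hu1
      simpa [Function.comp_def] using this
    have hcomb := ((hu1.const_mul A).sub ((hu1.mul hlog1).const_mul B)).add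
      ((hu1.mul (hlog1.pow 2)).const_mul C)
    have hval : A * 1 - B * (1 * 0) + C * (1 * (0:ℝ) ^ 2) = 1 := by rw [hA]; ring
    rw [← hval]
    exact hcomb
  have key := integral_Ioi_of_hasDerivAt_of_nonneg hcont hderiv hnonneg htop
  rw [hF0] at key
  simpa using key
end

section
/- Let λ > 0, p₁, p₂ ∈ [0,1] with p₁+p₂ ≤ 1, and let F(x) = (1 - e^{-λx})[1 - (1-p₁) ln(1-e^{-λx}) + ((1-p₁-p₂)/2)(ln(1-e^{-λx}))²] for x > 0 with F(x)=0 for x ≤ 0. Then F is nondecreasing, lim_{x→∞} F(x) = 1, and 0 ≤ F(x) ≤ 1 for all x. -/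
open Filter

theorem stmt_11 (lam p₁ p₂ : ℝ) (hlam : 0 < lam)
    (hp₁ : p₁ ∈ Set.Icc (0:ℝ) 1) (hp₂ : p₂ ∈ Set.Icc (0:ℝ) 1) (hsum : p₁ + p₂ ≤ 1)
    (F : ℝ → ℝ)
    (hFpos : ∀ x : ℝ, 0 < x →
      F x = (1 - Real.exp (-lam * x)) *
        (1 - (1 - p₁) * Real.log (1 - Real.exp (-lam * x)) +
          ((1 - p₁ - p₂) / 2) * (Real.log (1 - Real.exp (-lam * x))) ^ 2))
    (hFneg : ∀ x : ℝ, x ≤ 0 → F x = 0) :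
    Monotone F ∧
    Tendsto F atTop (nhds 1) ∧
    ∀ x : ℝ, F x ∈ Set.Icc (0:ℝ) 1 := by
  obtain ⟨hp1l, hp1u⟩ := hp₁
  obtain ⟨hp2l, hp2u⟩ := hp₂
  set a : ℝ := 1 - p₁ with ha
  set b : ℝ := (1 - p₁ - p₂) / 2 with hb
  have ha0 : 0 ≤ a := by simp [ha]; linarith
  have ha1 : a ≤ 1 := by simp [ha]; linarith
  have hb0 : 0 ≤ b := by simp [hb]; linarith
  have hab : 2 * b ≤ a := by simp [ha, hb]; linarith
  set g : ℝ → ℝ := fun u => u * (1 - a * Real.log u + b * (Real.log u) ^ 2) with hgdef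
  -- g is monotone on (0, 1]
  have hmono : MonotoneOn g (Set.Ioc (0:ℝ) 1) := by
    have hcont : ContinuousOn g (Set.Ioc (0:ℝ) 1) := by
      apply ContinuousOn.mul continuousOn_id
      have hlog : ContinuousOn Real.log (Set.Ioc (0:ℝ) 1) :=
        Real.continuousOn_log.mono (fun u hu => ne_of_gt hu.1)
      exact ((continuousOn_const.sub (continuousOn_const.mul hlog)).add
        (continuousOn_const.mul (hlog.pow 2)))
    have hderiv : ∀ u ∈ Set.Ioo (0:ℝ) 1, HasDerivAt g
        ((1 - a) + (2 * b - a) * Real.log u + b * (Real.log u) ^ 2) u := by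
      intro u hu
      have hu0 : (0:ℝ) < u := hu.1
      have hl := Real.hasDerivAt_log hu0.ne'
      have hinner : HasDerivAt (fun u => 1 - a * Real.log u + b * (Real.log u) ^ 2)
          ((0 - a * u⁻¹) + b * ((2:ℕ) * Real.log u ^ (2 - 1) * u⁻¹)) u :=
        ((hasDerivAt_const u (1:ℝ)).sub (hl.const_mul a)).add ((hl.pow 2).const_mul b)
      have hmul := (hasDerivAt_id u).mul hinner
      refine hmul.congr_deriv ?_
      simp only [id, Nat.cast_ofNat, show (2:ℕ) - 1 = 1 from rfl, pow_one]
      have hui : u * u⁻¹ = 1 := mul_inv_cancel₀ hu0.ne'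
      linear_combination (2 * b * Real.log u - a) * hui
    apply monotoneOn_of_deriv_nonneg (convex_Ioc (0:ℝ) 1) hcont
    · intro u hu
      rw [interior_Ioc] at hu
      exact (hderiv u hu).differentiableAt.differentiableWithinAt
    · intro u hu
      rw [interior_Ioc] at hu
      rw [(hderiv u hu).deriv]
      have hlog : Real.log u ≤ 0 := Real.log_nonpos (le_of_lt hu.1) (le_of_lt hu.2)
      nlinarith [sq_nonneg (Real.log u), mul_nonneg hb0 (sq_nonneg (Real.log u)),
        mul_nonpos_of_nonpos_of_nonneg (by linarith : 2*b - a ≤ 0) (neg_nonneg.mpr hlog)]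
  have hg1 : g 1 = 1 := by simp [hgdef]
  -- properties of u x = 1 - exp(-lam x)
  have huIoc : ∀ x : ℝ, 0 < x → (1 - Real.exp (-lam * x)) ∈ Set.Ioc (0:ℝ) 1 := by
    intro x hx
    constructor
    · have : Real.exp (-lam * x) < 1 := by
        rw [Real.exp_lt_one_iff]; nlinarith
      linarith
    · have := Real.exp_pos (-lam * x); linarith
  have hFg : ∀ x : ℝ, 0 < x → F x = g (1 - Real.exp (-lam * x)) := by
    intro x hx
    rw [hFpos x hx]
  have hFnonneg : ∀ x : ℝ, 0 < x → 0 ≤ F x := by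
    intro x hx
    rw [hFg x hx]
    set u := 1 - Real.exp (-lam * x)
    have hu := huIoc x hx
    have hlog : Real.log u ≤ 0 := Real.log_nonpos (le_of_lt hu.1) hu.2
    refine mul_nonneg (le_of_lt hu.1) ?_
    nlinarith [mul_nonneg hb0 (sq_nonneg (Real.log u)),
      mul_nonpos_of_nonneg_of_nonpos ha0 hlog]
  have hFle1 : ∀ x : ℝ, 0 < x → F x ≤ 1 := by
    intro x hx
    rw [hFg x hx]
    have h := hmono (huIoc x hx) (Set.mem_Ioc.mpr ⟨one_pos, le_refl 1⟩) (huIoc x hx).2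
    rw [hg1] at h
    exact h
  have hMono : Monotone F := by
    intro x y hxy
    by_cases hy : y ≤ 0
    · rw [hFneg x (hxy.trans hy), hFneg y hy]
    · push_neg at hy
      by_cases hx : x ≤ 0
      · rw [hFneg x hx]; exact hFnonneg y hy
      · push_neg at hx
        rw [hFg x hx, hFg y hy]
        apply hmono (huIoc x hx) (huIoc y hy)
        have : Real.exp (-lam * y) ≤ Real.exp (-lam * x) :=
          Real.exp_le_exp.mpr (by nlinarith)
        linarith
  refine ⟨hMono, ?_, ?_⟩
  · have hgc : ContinuousAt g 1 := by
      have hlog : ContinuousAt Real.log 1 := Real.continuousAt_log one_ne_zero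
      exact continuousAt_id.mul
        (((continuousAt_const.sub (continuousAt_const.mul hlog)).add
          (continuousAt_const.mul (hlog.pow 2))))
    have hu : Tendsto (fun x : ℝ => 1 - Real.exp (-lam * x)) atTop (nhds 1) := by
      have h1 : Tendsto (fun x : ℝ => -lam * x) atTop atBot := by
        exact (tendsto_const_mul_atBot_of_neg (by linarith)).mpr tendsto_id
      have h2 : Tendsto (fun x : ℝ => Real.exp (-lam * x)) atTop (nhds 0) :=
        Real.tendsto_exp_atBot.comp h1
      have h3 : Tendsto (fun x : ℝ => (1:ℝ) - Real.exp (-lam * x)) atTop (nhds (1 - 0)) :=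
        (tendsto_const_nhds : Tendsto (fun _ : ℝ => (1:ℝ)) atTop (nhds 1)).sub h2
      simpa using h3
    have hcomp : Tendsto (fun x : ℝ => g (1 - Real.exp (-lam * x))) atTop (nhds 1) := by
      have := hgc.tendsto.comp hu
      rwa [hg1] at this
    apply hcomp.congr'
    filter_upwards [eventually_gt_atTop (0:ℝ)] with x hx
    exact (hFg x hx).symm
  · intro x
    by_cases hx : x ≤ 0
    · rw [hFneg x hx]; exact ⟨le_refl 0, zero_le_one⟩
    · push_neg at hx
      exact ⟨hFnonneg x hx, hFle1 x hx⟩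
end

section
/- Let λ > 0, p₁, p₂ ∈ [0,1] with p₁+p₂ ≤ 1. The first moment of the CLRBTE(λ, p₁, p₂) distribution equals (1/λ) ∑_{k=1}^∞ (1/k)[p₁/(k+1) + p₂/(k+1)² + (1-p₁-p₂)/(k+1)³], i.e., ∫₀^∞ x f(x) dx equals this convergent series, where f is the CLRBTE PDF. -/
open MeasureTheory Real Set Filter

lemma aux_int_pow_exp (j : ℕ) {r : ℝ} (hr : 0 < r) :
    IntegrableOn (fun t : ℝ => t ^ j * Real.exp (-(r * t))) (Set.Ioi 0) := by
  apply integrable_of_isBigO_exp_neg (half_pos hr)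
  · exact ((continuous_pow j).mul (by continuity)).continuousOn
  · have h1 : Tendsto (fun t : ℝ => t ^ j * Real.exp (-(r / 2) * t)) atTop (nhds 0) := by
      have := tendsto_rpow_mul_exp_neg_mul_atTop_nhds_zero (j : ℝ) (r / 2) (half_pos hr)
      simpa [Real.rpow_natCast] using this
    have h2 : (fun t : ℝ => t ^ j * Real.exp (-(r / 2) * t)) =O[atTop] (fun _ => (1 : ℝ)) :=
      h1.isBigO_one ℝ
    have h3 := h2.mul (Asymptotics.isBigO_refl (fun t : ℝ => Real.exp (-(r / 2) * t)) atTop)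
    have heq : (fun t : ℝ => t ^ j * Real.exp (-(r * t)))
        = fun t : ℝ => t ^ j * Real.exp (-(r / 2) * t) * Real.exp (-(r / 2) * t) := by
      funext t
      rw [mul_assoc, ← Real.exp_add]
      ring_nf
    rw [heq]
    simpa using h3

lemma aux_mom (j m : ℕ) :
    IntegrableOn (fun u : ℝ => u ^ m * (-Real.log u) ^ j) (Set.Ioo 0 1) ∧
      ∫ u in Set.Ioo (0:ℝ) 1, u ^ m * (-Real.log u) ^ j
        = (Nat.factorial j : ℝ) / ((m : ℝ) + 1) ^ (j + 1) := by
  have himg : (fun t : ℝ => Real.exp (-t)) '' Set.Ioi 0 = Set.Ioo 0 1 := by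
    ext u
    constructor
    · rintro ⟨t, ht, rfl⟩
      exact ⟨Real.exp_pos _, Real.exp_lt_one_iff.2 (by simpa using (Set.mem_Ioi.1 ht))⟩
    · rintro ⟨h0, h1⟩
      refine ⟨-Real.log u, ?_, by simp [Real.exp_log h0]⟩
      simpa using Real.log_neg h0 h1
  have hder : ∀ t ∈ Set.Ioi (0:ℝ),
      HasDerivWithinAt (fun t : ℝ => Real.exp (-t)) (-Real.exp (-t)) (Set.Ioi 0) t := by
    intro t _
    simpa using ((hasDerivAt_neg t).exp).hasDerivWithinAt
  have hinj : Set.InjOn (fun t : ℝ => Real.exp (-t)) (Set.Ioi 0) :=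
    fun a _ b _ h => neg_injective (Real.exp_injective h)
  have hcongr : Set.EqOn
      (fun t : ℝ => |(-Real.exp (-t))| • ((Real.exp (-t)) ^ m * (-Real.log (Real.exp (-t))) ^ j))
      (fun t : ℝ => t ^ j * Real.exp (-(((m : ℝ) + 1) * t))) (Set.Ioi 0) := by
    intro t _
    simp only [abs_neg, abs_of_pos (Real.exp_pos _), Real.log_exp, neg_neg, smul_eq_mul]
    rw [← Real.exp_nat_mul]
    rw [show Real.exp (-t) * (Real.exp ((m : ℝ) * -t) * t ^ j)
        = t ^ j * (Real.exp (-t) * Real.exp ((m : ℝ) * -t)) from by ring, ← Real.exp_add]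
    ring_nf
  constructor
  · have hiff := integrableOn_image_iff_integrableOn_abs_deriv_smul measurableSet_Ioi hder hinj
      (fun u : ℝ => u ^ m * (-Real.log u) ^ j)
    rw [himg] at hiff
    rw [hiff]
    exact ((aux_int_pow_exp j (by positivity : (0:ℝ) < (m : ℝ) + 1)).congr_fun
      (fun t ht => (hcongr ht).symm) measurableSet_Ioi)
  · have key := integral_image_eq_integral_abs_deriv_smul measurableSet_Ioi hder hinj
      (fun u : ℝ => u ^ m * (-Real.log u) ^ j)
    rw [himg, setIntegral_congr_fun measurableSet_Ioi hcongr] at key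
    rw [key]
    have hval := integral_rpow_mul_exp_neg_mul_Ioi
      (a := (j : ℝ) + 1) (r := (m : ℝ) + 1) (by positivity) (by positivity)
    have hexp : ∀ t : ℝ, t ^ (((j : ℝ) + 1) - 1) = t ^ j := by
      intro t
      rw [add_sub_cancel_right, Real.rpow_natCast]
    simp only [hexp] at hval
    rw [hval]
    rw [Real.Gamma_nat_eq_factorial j]  -- Gamma (j+1) = j!
    rw [show ((j : ℝ) + 1) = ((j + 1 : ℕ) : ℝ) by push_cast; ring, Real.rpow_natCast]
    rw [one_div, inv_pow, div_eq_mul_inv, mul_comm]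

noncomputable def hfun (p₁ p₂ c lam : ℝ) (k : ℕ) : ℝ → ℝ := fun u =>
  (p₁ * (u ^ (k+1) * (-Real.log u) ^ 0) + p₂ * (u ^ (k+1) * (-Real.log u) ^ 1)
    + c / 2 * (u ^ (k+1) * (-Real.log u) ^ 2)) / (((k : ℝ) + 1) * lam)

noncomputable def gfun (p₁ p₂ c lam : ℝ) : ℝ → ℝ := fun u =>
  -Real.log (1 - u) * (p₁ + p₂ * (-Real.log u) + c / 2 * (-Real.log u) ^ 2) / lam

lemma hfun_integrableOn (p₁ p₂ c lam : ℝ) (k : ℕ) :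
    IntegrableOn (hfun p₁ p₂ c lam k) (Set.Ioo 0 1) := by
  have I0 := (aux_mom 0 (k+1)).1
  have I1 := (aux_mom 1 (k+1)).1
  have I2 := (aux_mom 2 (k+1)).1
  have := (((I0.const_mul p₁).add (I1.const_mul p₂)).add
    (I2.const_mul (c/2))).div_const (((k : ℝ) + 1) * lam)
  exact this

lemma hfun_integral (p₁ p₂ c lam : ℝ) (hlam : lam ≠ 0) (k : ℕ) :
    ∫ u in Set.Ioo (0:ℝ) 1, hfun p₁ p₂ c lam k u
      = (1/lam) * ((1 / ((k:ℝ)+1)) * (p₁ / ((k:ℝ)+2) + p₂ / ((k:ℝ)+2)^2 + c / ((k:ℝ)+2)^3)) := by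
  have I0 := (aux_mom 0 (k+1))
  have I1 := (aux_mom 1 (k+1))
  have I2 := (aux_mom 2 (k+1))
  unfold hfun
  have A0 : Integrable (fun u : ℝ => p₁ * (u ^ (k+1) * (-Real.log u) ^ 0))
      (volume.restrict (Set.Ioo 0 1)) := I0.1.const_mul p₁
  have A1 : Integrable (fun u : ℝ => p₂ * (u ^ (k+1) * (-Real.log u) ^ 1))
      (volume.restrict (Set.Ioo 0 1)) := I1.1.const_mul p₂
  have A2 : Integrable (fun u : ℝ => c / 2 * (u ^ (k+1) * (-Real.log u) ^ 2))
      (volume.restrict (Set.Ioo 0 1)) := I2.1.const_mul (c/2)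
  have A01 : Integrable (fun u : ℝ => p₁ * (u ^ (k+1) * (-Real.log u) ^ 0)
      + p₂ * (u ^ (k+1) * (-Real.log u) ^ 1)) (volume.restrict (Set.Ioo 0 1)) := A0.add A1
  rw [integral_div, integral_add A01 A2, integral_add A0 A1,
    integral_const_mul, integral_const_mul, integral_const_mul, I0.2, I1.2, I2.2]
  have hk1 : ((k:ℝ) + 1) ≠ 0 := by positivity
  have hk2 : ((k:ℝ) + 2) ≠ 0 := by positivity
  push_cast
  simp only [Nat.factorial]
  push_cast
  field_simp
  ring

lemma hfun_nonneg {p₁ p₂ c lam : ℝ} (hp₁ : 0 ≤ p₁) (hp₂ : 0 ≤ p₂) (hc : 0 ≤ c)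
    (hlam : 0 < lam) (k : ℕ) {u : ℝ} (hu : u ∈ Set.Ioo (0:ℝ) 1) :
    0 ≤ hfun p₁ p₂ c lam k u := by
  obtain ⟨h0, h1⟩ := hu
  have hlog : 0 ≤ -Real.log u := by
    have := Real.log_nonpos h0.le h1.le
    linarith
  have hu0 : 0 ≤ u := h0.le
  apply div_nonneg
  · have t0 : (0:ℝ) ≤ u ^ (k+1) * (-Real.log u) ^ 0 := by positivity
    have t1 : (0:ℝ) ≤ u ^ (k+1) * (-Real.log u) ^ 1 := by positivity
    have t2 : (0:ℝ) ≤ u ^ (k+1) * (-Real.log u) ^ 2 := by positivity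
    have := mul_nonneg hp₁ t0
    have := mul_nonneg hp₂ t1
    have := mul_nonneg (by linarith : (0:ℝ) ≤ c / 2) t2
    linarith
  · positivity

lemma hfun_hasSum (p₁ p₂ c lam : ℝ) (hlam : lam ≠ 0) {u : ℝ} (hu : u ∈ Set.Ioo (0:ℝ) 1) :
    HasSum (fun k : ℕ => hfun p₁ p₂ c lam k u) (gfun p₁ p₂ c lam u) := by
  obtain ⟨h0, h1⟩ := hu
  have habs : |u| < 1 := abs_lt.2 ⟨by linarith, h1⟩
  have hs := (Real.hasSum_pow_div_log_of_abs_lt_one habs).mul_right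
      ((p₁ + p₂ * (-Real.log u) + c / 2 * (-Real.log u) ^ 2) / lam)
  have heq : (fun k : ℕ => u ^ (k+1) / ((k:ℝ)+1) *
      ((p₁ + p₂ * (-Real.log u) + c / 2 * (-Real.log u) ^ 2) / lam))
      = fun k => hfun p₁ p₂ c lam k u := by
    funext k
    unfold hfun
    have hk1 : ((k:ℝ) + 1) ≠ 0 := by positivity
    field_simp
  have hs' : HasSum (fun k : ℕ => hfun p₁ p₂ c lam k u)
      (-Real.log (1 - u) * ((p₁ + p₂ * (-Real.log u) + c / 2 * (-Real.log u) ^ 2) / lam)) := by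
    rw [← heq]
    exact hs
  have hg : gfun p₁ p₂ c lam u
      = -Real.log (1 - u) * ((p₁ + p₂ * (-Real.log u) + c / 2 * (-Real.log u) ^ 2) / lam) := by
    unfold gfun; ring
  rw [hg]
  exact hs'

theorem stmt_14 (lam p₁ p₂ : ℝ) (hlam : 0 < lam)
    (hp₁ : p₁ ∈ Set.Icc (0:ℝ) 1) (hp₂ : p₂ ∈ Set.Icc (0:ℝ) 1) (hsum : p₁ + p₂ ≤ 1) :
    Summable (fun k : ℕ =>
      (1 / ((k : ℝ) + 1)) *
        (p₁ / ((k : ℝ) + 2) + p₂ / ((k : ℝ) + 2) ^ 2 + (1 - p₁ - p₂) / ((k : ℝ) + 2) ^ 3)) ∧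
    ∫ x in Set.Ioi (0:ℝ),
        x * (lam * Real.exp (-lam * x) *
          (p₁ - p₂ * Real.log (1 - Real.exp (-lam * x)) +
            ((1 - p₁ - p₂) / 2) * (Real.log (1 - Real.exp (-lam * x))) ^ 2))
      = (1 / lam) * ∑' k : ℕ,
          (1 / ((k : ℝ) + 1)) *
            (p₁ / ((k : ℝ) + 2) + p₂ / ((k : ℝ) + 2) ^ 2 +
              (1 - p₁ - p₂) / ((k : ℝ) + 2) ^ 3) := by
  obtain ⟨hp₁0, hp₁1⟩ := hp₁
  obtain ⟨hp₂0, hp₂1⟩ := hp₂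
  have hlam' : lam ≠ 0 := ne_of_gt hlam
  have hc0 : 0 ≤ 1 - p₁ - p₂ := by linarith
  have hc1 : 1 - p₁ - p₂ ≤ 1 := by linarith
  -- Summability
  have hsummable : Summable (fun k : ℕ =>
      (1 / ((k : ℝ) + 1)) *
        (p₁ / ((k : ℝ) + 2) + p₂ / ((k : ℝ) + 2) ^ 2 + (1 - p₁ - p₂) / ((k : ℝ) + 2) ^ 3)) := by
    have h1 : Summable (fun n : ℕ => 1 / ((n : ℝ)) ^ 2) := by
      exact_mod_cast Real.summable_one_div_nat_pow.2 one_lt_two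
    have h2 := (summable_nat_add_iff 1).2 h1
    have h3 : Summable (fun n : ℕ => 1 / ((n : ℝ) + 1) ^ 2) := by
      refine h2.congr fun n => ?_
      push_cast; ring
    have hbase : Summable (fun k : ℕ => 3 / ((k : ℝ) + 1) ^ 2) := by
      have := h3.mul_left (3 : ℝ)
      refine this.congr fun n => ?_
      ring
    refine Summable.of_nonneg_of_le (fun k => ?_) (fun k => ?_) hbase
    · have hk2 : (0:ℝ) < (k:ℝ) + 2 := by positivity
      exact mul_nonneg (by positivity)
        (add_nonneg (add_nonneg (div_nonneg hp₁0 hk2.le) (div_nonneg hp₂0 (by positivity)))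
          (div_nonneg hc0 (by positivity)))
    · have hk1 : (0:ℝ) < (k:ℝ) + 1 := by positivity
      have hk2 : (0:ℝ) < (k:ℝ) + 2 := by positivity
      have e1 : p₁ / ((k:ℝ)+2) ≤ 1 / ((k:ℝ)+1) := div_le_div₀ zero_le_one hp₁1 hk1 (by linarith)
      have e2 : p₂ / ((k:ℝ)+2)^2 ≤ 1 / ((k:ℝ)+1) :=
        div_le_div₀ zero_le_one hp₂1 hk1 (by nlinarith)
      have e3 : (1 - p₁ - p₂) / ((k:ℝ)+2)^3 ≤ 1 / ((k:ℝ)+1) :=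
        div_le_div₀ zero_le_one hc1 hk1 (by nlinarith)
      calc (1 / ((k:ℝ) + 1)) *
            (p₁ / ((k:ℝ) + 2) + p₂ / ((k:ℝ) + 2) ^ 2 + (1 - p₁ - p₂) / ((k:ℝ) + 2) ^ 3)
          ≤ (1 / ((k:ℝ) + 1)) * (3 / ((k:ℝ) + 1)) := by
            apply mul_le_mul_of_nonneg_left _ (by positivity)
            have h33 : (1:ℝ)/((k:ℝ)+1) + 1/((k:ℝ)+1) + 1/((k:ℝ)+1) = 3/((k:ℝ)+1) := by ring
            linarith
        _ = 3 / ((k:ℝ) + 1) ^ 2 := by rw [div_mul_div_comm, one_mul, ← sq]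
  refine ⟨hsummable, ?_⟩
  -- change of variables setup
  have hder : ∀ x ∈ Set.Ioi (0:ℝ), HasDerivWithinAt (fun x : ℝ => 1 - Real.exp (-lam * x))
      (lam * Real.exp (-lam * x)) (Set.Ioi 0) x := by
    intro x _
    have h1 : HasDerivAt (fun x : ℝ => -lam * x) (-lam) x := by
      simpa using (hasDerivAt_id x).const_mul (-lam)
    have h2 := (h1.exp).const_sub 1
    have h3 : -(Real.exp (-lam * x) * -lam) = lam * Real.exp (-lam * x) := by ring
    rw [h3] at h2
    exact h2.hasDerivWithinAt
  have hinj : Set.InjOn (fun x : ℝ => 1 - Real.exp (-lam * x)) (Set.Ioi 0) := by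
    intro a _ b _ h
    have h' : Real.exp (-lam * a) = Real.exp (-lam * b) := by
      dsimp only at h; linarith
    have := Real.exp_injective h'
    exact mul_left_cancel₀ (neg_ne_zero.2 hlam') this
  have himg : (fun x : ℝ => 1 - Real.exp (-lam * x)) '' Set.Ioi 0 = Set.Ioo 0 1 := by
    ext u
    constructor
    · rintro ⟨x, hx, rfl⟩
      have hx0 : (0:ℝ) < x := hx
      have h1 : Real.exp (-lam * x) < 1 := Real.exp_lt_one_iff.2 (by nlinarith)
      have h2 : 0 < Real.exp (-lam * x) := Real.exp_pos _
      exact ⟨by dsimp only; linarith, by dsimp only; linarith⟩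
    · rintro ⟨h0, h1⟩
      refine ⟨-Real.log (1 - u) / lam, ?_, ?_⟩
      · have hlog : Real.log (1 - u) < 0 := Real.log_neg (by linarith) (by linarith)
        exact div_pos (by linarith) hlam
      · dsimp only
        rw [show -lam * (-Real.log (1 - u) / lam) = Real.log (1 - u) by field_simp,
          Real.exp_log (by linarith)]
        ring
  have key := integral_image_eq_integral_abs_deriv_smul measurableSet_Ioi hder hinj
      (gfun p₁ p₂ (1 - p₁ - p₂) lam)
  rw [himg] at key
  have hA : Set.EqOn
      (fun x : ℝ => x * (lam * Real.exp (-lam * x) *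
          (p₁ - p₂ * Real.log (1 - Real.exp (-lam * x)) +
            ((1 - p₁ - p₂) / 2) * (Real.log (1 - Real.exp (-lam * x))) ^ 2)))
      (fun x : ℝ => |lam * Real.exp (-lam * x)| •
          gfun p₁ p₂ (1 - p₁ - p₂) lam (1 - Real.exp (-lam * x))) (Set.Ioi 0) := by
    intro x hx
    dsimp only
    unfold gfun
    rw [abs_of_pos (mul_pos hlam (Real.exp_pos _)), smul_eq_mul,
      show (1 : ℝ) - (1 - Real.exp (-lam * x)) = Real.exp (-lam * x) by ring,
      Real.log_exp]
    field_simp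
    ring
  have hIoo : ∫ u in Set.Ioo (0:ℝ) 1, gfun p₁ p₂ (1 - p₁ - p₂) lam u
      = ∫ u in Set.Ioo (0:ℝ) 1, ∑' k : ℕ, hfun p₁ p₂ (1 - p₁ - p₂) lam k u := by
    refine setIntegral_congr_fun measurableSet_Ioo fun u hu => ?_
    exact (hfun_hasSum p₁ p₂ (1 - p₁ - p₂) lam hlam' hu).tsum_eq.symm
  have hint : ∀ k : ℕ, Integrable (hfun p₁ p₂ (1 - p₁ - p₂) lam k)
      (volume.restrict (Set.Ioo (0:ℝ) 1)) := fun k => hfun_integrableOn p₁ p₂ (1 - p₁ - p₂) lam k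
  have hnormval : ∀ k : ℕ, ∫ u, ‖hfun p₁ p₂ (1 - p₁ - p₂) lam k u‖
        ∂(volume.restrict (Set.Ioo (0:ℝ) 1))
      = (1/lam) * ((1 / ((k:ℝ)+1)) *
          (p₁ / ((k:ℝ)+2) + p₂ / ((k:ℝ)+2)^2 + (1 - p₁ - p₂) / ((k:ℝ)+2)^3)) := by
    intro k
    rw [← hfun_integral p₁ p₂ (1 - p₁ - p₂) lam hlam' k]
    refine setIntegral_congr_fun measurableSet_Ioo fun u hu => ?_
    rw [Real.norm_eq_abs, abs_of_nonneg (hfun_nonneg hp₁0 hp₂0 hc0 hlam k hu)]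
  have hnorm_summable : Summable (fun k : ℕ => ∫ u, ‖hfun p₁ p₂ (1 - p₁ - p₂) lam k u‖
      ∂(volume.restrict (Set.Ioo (0:ℝ) 1))) := by
    refine (hsummable.mul_left (1/lam)).congr fun k => ?_
    exact (hnormval k).symm
  have hswap := MeasureTheory.integral_tsum_of_summable_integral_norm hint hnorm_summable
  calc ∫ x in Set.Ioi (0:ℝ),
        x * (lam * Real.exp (-lam * x) *
          (p₁ - p₂ * Real.log (1 - Real.exp (-lam * x)) +
            ((1 - p₁ - p₂) / 2) * (Real.log (1 - Real.exp (-lam * x))) ^ 2))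
      = ∫ x in Set.Ioi (0:ℝ), |lam * Real.exp (-lam * x)| •
          gfun p₁ p₂ (1 - p₁ - p₂) lam (1 - Real.exp (-lam * x)) :=
        setIntegral_congr_fun measurableSet_Ioi hA
    _ = ∫ u in Set.Ioo (0:ℝ) 1, gfun p₁ p₂ (1 - p₁ - p₂) lam u := key.symm
    _ = ∫ u in Set.Ioo (0:ℝ) 1, ∑' k : ℕ, hfun p₁ p₂ (1 - p₁ - p₂) lam k u := hIoo
    _ = ∑' k : ℕ, ∫ u in Set.Ioo (0:ℝ) 1, hfun p₁ p₂ (1 - p₁ - p₂) lam k u := hswap.symm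
    _ = ∑' k : ℕ, (1/lam) * ((1 / ((k:ℝ)+1)) *
          (p₁ / ((k:ℝ)+2) + p₂ / ((k:ℝ)+2)^2 + (1 - p₁ - p₂) / ((k:ℝ)+2)^3)) :=
        tsum_congr fun k => hfun_integral p₁ p₂ (1 - p₁ - p₂) lam hlam' k
    _ = (1 / lam) * ∑' k : ℕ,
          (1 / ((k : ℝ) + 1)) *
            (p₁ / ((k : ℝ) + 2) + p₂ / ((k : ℝ) + 2) ^ 2 +
              (1 - p₁ - p₂) / ((k : ℝ) + 2) ^ 3) := tsum_mul_left
end
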